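/- For every n ≥ 3, the single strip Sₙ is equivalent modulo the Kayles universe to a sum of strips of lengths 1 and 2: if n = 3k then Sₙ ≡ kS₁ + kS₂; if n = 3k+1 then Sₙ ≡ (k+1)S₁ + kS₂; if n = 3k+2 then Sₙ ≡ kS₁ + (k+1)S₂, where equivalence means equal misère outcomes after adding any Kayles position. -/
import Mathlib


/-- Add a strip of length `k` to a position (strips of length 0 are discarded). -/
def addStrip (m : Multiset ℕ) (k : ℕ) : Multiset ℕ := if k = 0 then m else k ::ₘ m

/-- Left removes one square from a strip of length `n ≥ 1`, leaving strips `i` and `n-1-i`. -/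
def LeftMove (G G' : Multiset ℕ) : Prop :=
  ∃ n ∈ G, ∃ i, i + 1 ≤ n ∧ G' = addStrip (addStrip (G.erase n) i) (n - 1 - i)

/-- Right removes two adjacent squares from a strip of length `n ≥ 2`, leaving `i` and `n-2-i`. -/
def RightMove (G G' : Multiset ℕ) : Prop :=
  ∃ n ∈ G, ∃ i, i + 2 ≤ n ∧ G' = addStrip (addStrip (G.erase n) i) (n - 2 - i)

mutual
  /-- Misère play: Left, to move, wins (a player unable to move wins). -/
  inductive LeftWinsMover : Multiset ℕ → Prop
    | cannot (G : Multiset ℕ) : (¬ ∃ G', LeftMove G G') → LeftWinsMover G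
    | move (G G' : Multiset ℕ) : LeftMove G G' → LeftWinsWaiter G' → LeftWinsMover G
  /-- Misère play: Left wins with Right to move. -/
  inductive LeftWinsWaiter : Multiset ℕ → Prop
    | intro (G : Multiset ℕ) : (∃ G', RightMove G G') →
        (∀ G', RightMove G G' → LeftWinsMover G') → LeftWinsWaiter G
end

inductive Outcome | L | N | P | R
  deriving DecidableEq

open Classical in
/-- The misère outcome `o⁻(G)`. -/
noncomputable def outcome (G : Multiset ℕ) : Outcome :=
  if LeftWinsMover G then (if LeftWinsWaiter G then Outcome.L else Outcome.N)
  else (if LeftWinsWaiter G then Outcome.P else Outcome.R)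

/-- The partial order on outcomes: `L` greatest, `R` least, `N` and `P` incomparable. -/
def Outcome.le (a b : Outcome) : Prop := a = b ∨ a = Outcome.R ∨ b = Outcome.L

/-- `pos k j` is the position `kS₁ + jS₂`. -/
def pos (k j : ℕ) : Multiset ℕ := Multiset.replicate k 1 + Multiset.replicate j 2

def w (n : ℕ) : ℤ := if n % 3 = 1 then -1 else if n % 3 = 2 then 1 else 0

def v (G : Multiset ℕ) : ℤ := (G.map w).sum

lemma v_cons (n : ℕ) (m : Multiset ℕ) : v (n ::ₘ m) = w n + v m := by
  simp [v]

lemma v_addStrip (m : Multiset ℕ) (k : ℕ) : v (addStrip m k) = v m + w k := by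
  unfold addStrip; split_ifs with h
  · simp [h, w]
  · rw [v_cons]; ring

lemma addStrip_sum (m : Multiset ℕ) (k : ℕ) : (addStrip m k).sum = m.sum + k := by
  unfold addStrip; split_ifs with h <;> simp [h] <;> omega

lemma v_erase {n : ℕ} {G : Multiset ℕ} (h : n ∈ G) : v G = w n + v (G.erase n) := by
  conv_lhs => rw [← Multiset.cons_erase h]
  rw [v_cons]

lemma sum_erase {n : ℕ} {G : Multiset ℕ} (h : n ∈ G) : G.sum = (G.erase n).sum + n := by
  conv_lhs => rw [← Multiset.cons_erase h]
  simp [add_comm]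

lemma wL (a b : ℕ) : w a + w b = w (a + b + 1) + 1 ∨ w a + w b = w (a + b + 1) - 2 := by
  simp only [w]; split_ifs <;> first | exact (‹False›).elim | omega

lemma wR (a b : ℕ) : w a + w b = w (a + b + 2) - 1 ∨ w a + w b = w (a + b + 2) + 2 := by
  simp only [w]; split_ifs <;> first | exact (‹False›).elim | omega

lemma left_v {G G' : Multiset ℕ} (h : LeftMove G G') :
    (v G' = v G + 1 ∨ v G' = v G - 2) ∧ G'.sum + 1 = G.sum := by
  obtain ⟨n, hn, i, hi, rfl⟩ := h
  have e1 : i + (n - 1 - i) + 1 = n := by omega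
  constructor
  · rw [v_addStrip, v_addStrip, v_erase hn]
    rcases wL i (n - 1 - i) with h | h <;> rw [e1] at h <;> omega
  · rw [addStrip_sum, addStrip_sum, sum_erase hn]; omega

lemma right_v {G G' : Multiset ℕ} (h : RightMove G G') :
    (v G' = v G - 1 ∨ v G' = v G + 2) ∧ G'.sum + 2 = G.sum := by
  obtain ⟨n, hn, i, hi, rfl⟩ := h
  have e1 : i + (n - 2 - i) + 2 = n := by omega
  constructor
  · rw [v_addStrip, v_addStrip, v_erase hn]
    rcases wR i (n - 2 - i) with h | h <;> rw [e1] at h <;> omega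
  · rw [addStrip_sum, addStrip_sum, sum_erase hn]; omega

lemma exPlus {n : ℕ} (h1 : 1 ≤ n) (h2 : n ≠ 2) :
    ∃ i, i + 1 ≤ n ∧ w i + w (n - 1 - i) = w n + 1 := by
  by_cases hc : n % 3 = 2
  · have h5 : 5 ≤ n := by omega
    refine ⟨2, by omega, ?_⟩
    simp only [w]; split_ifs <;> first | exact (‹False›).elim | omega
  · refine ⟨0, h1, ?_⟩
    simp only [w]; split_ifs <;> first | exact (‹False›).elim | omega

lemma exRMinus {n : ℕ} (h : 2 ≤ n) :
    ∃ i, i + 2 ≤ n ∧ w i + w (n - 2 - i) = w n - 1 := by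
  by_cases hc : n % 3 = 1
  · refine ⟨1, by omega, ?_⟩
    simp only [w]; split_ifs <;> first | exact (‹False›).elim | omega
  · refine ⟨0, h, ?_⟩
    simp only [w]; split_ifs <;> first | exact (‹False›).elim | omega

lemma no_left_iff {G : Multiset ℕ} : (¬ ∃ G', LeftMove G G') ↔ ∀ n ∈ G, n = 0 := by
  constructor
  · intro h n hn
    by_contra hne
    exact h ⟨_, n, hn, 0, by omega, rfl⟩
  · rintro h ⟨G', n, hn, i, hi, _⟩
    have := h n hn; omega

lemma v_zero_of_all_zero {G : Multiset ℕ} (h : ∀ n ∈ G, n = 0) : v G = 0 := by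
  refine Multiset.sum_eq_zero ?_
  intro x hx
  obtain ⟨n, hn, rfl⟩ := Multiset.mem_map.mp hx
  simp [h n hn, w]

lemma v_nonneg_of {G : Multiset ℕ} (h : ∀ n ∈ G, 0 ≤ w n) : 0 ≤ v G := by
  refine Multiset.sum_nonneg ?_
  intro x hx
  obtain ⟨n, hn, rfl⟩ := Multiset.mem_map.mp hx
  exact h n hn

lemma v_nonpos_of {G : Multiset ℕ} (h : ∀ n ∈ G, w n ≤ 0) : v G ≤ 0 := by
  have : 0 ≤ -v G := by
    have : -v G = (G.map (fun n => -w n)).sum := by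
      simp [v]
    rw [this]
    refine Multiset.sum_nonneg ?_
    intro x hx
    obtain ⟨n, hn, rfl⟩ := Multiset.mem_map.mp hx
    have := h n hn; omega
  omega

lemma main : ∀ N : ℕ, ∀ G : Multiset ℕ, G.sum = N →
    ((LeftWinsMover G ↔ 0 ≤ v G ∧ v G % 3 = 0) ∧
     (LeftWinsWaiter G ↔ 0 ≤ v G ∧ v G % 3 = 1)) := by
  intro N
  induction N using Nat.strong_induction_on with
  | _ N IH =>
    intro G hG
    constructor
    · constructor
      · intro h
        cases h with
        | cannot _ h =>
          have := v_zero_of_all_zero (no_left_iff.mp h)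
          omega
        | move _ G' mv hw =>
          obtain ⟨hv, hs⟩ := left_v mv
          have := ((IH G'.sum (by omega) G' rfl).2).mp hw
          omega
      · rintro ⟨h0, h3⟩
        by_cases hz : ∀ n ∈ G, n = 0
        · exact LeftWinsMover.cannot G (no_left_iff.mpr hz)
        · push_neg at hz
          obtain ⟨n, hn, hne⟩ := hz
          by_cases hgood : ∃ n ∈ G, 1 ≤ n ∧ n ≠ 2
          · obtain ⟨m, hm, hm1, hm2⟩ := hgood
            obtain ⟨i, hi, hwi⟩ := exPlus hm1 hm2
            set G' := addStrip (addStrip (G.erase m) i) (m - 1 - i) with hG'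
            have mv : LeftMove G G' := ⟨m, hm, i, hi, rfl⟩
            obtain ⟨hv, hs⟩ := left_v mv
            have hv' : v G' = v G + 1 := by
              rw [hG', v_addStrip, v_addStrip, v_erase hm]
              omega
            refine LeftWinsMover.move G G' mv ?_
            exact ((IH G'.sum (by omega) G' rfl).2).mpr (by omega)
          · push_neg at hgood
            have hn2 : n = 2 := by
              rcases hgood n hn (by omega) with h
              omega
            have hall : ∀ m ∈ G, 0 ≤ w m := by
              intro m hm
              by_cases hm0 : m = 0
              · simp [hm0, w]
              · have := hgood m hm (by omega)
                simp [this, w]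
            have hv1 : 1 ≤ v G := by
              rw [v_erase (hn2 ▸ hn : (2:ℕ) ∈ G)]
              have h2 := v_nonneg_of (G := G.erase 2)
                (fun m hm => hall m (Multiset.mem_of_mem_erase hm))
              have w2 : w 2 = 1 := rfl
              omega
            have hv3 : 3 ≤ v G := by omega
            set G' := addStrip (addStrip (G.erase 2) 0) (2 - 1 - 0) with hG'
            have mv : LeftMove G G' := ⟨2, hn2 ▸ hn, 0, by omega, rfl⟩
            obtain ⟨hv, hs⟩ := left_v mv
            have hv' : v G' = v G - 2 := by
              have w2 : w 2 = 1 := rfl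
              have w0 : w 0 = 0 := rfl
              have w1 : w 1 = -1 := rfl
              rw [hG', v_addStrip, v_addStrip, v_erase (hn2 ▸ hn : (2:ℕ) ∈ G)]
              norm_num
              omega
            refine LeftWinsMover.move G G' mv ?_
            exact ((IH G'.sum (by omega) G' rfl).2).mpr (by omega)
    · constructor
      · intro h
        cases h with
        | intro _ hex hall =>
          obtain ⟨G₀, n, hn, i, hi, _⟩ := hex
          obtain ⟨j, hj, hwj⟩ := exRMinus (show 2 ≤ n by omega)
          set G' := addStrip (addStrip (G.erase n) j) (n - 2 - j) with hG'
          have mv : RightMove G G' := ⟨n, hn, j, hj, rfl⟩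
          obtain ⟨hv, hs⟩ := right_v mv
          have hv' : v G' = v G - 1 := by
            rw [hG', v_addStrip, v_addStrip, v_erase hn]
            omega
          have := ((IH G'.sum (by omega) G' rfl).1).mp (hall G' mv)
          omega
      · rintro ⟨h0, h3⟩
        have hv1 : 1 ≤ v G := by omega
        have h2 : ∃ n ∈ G, n % 3 = 2 := by
          by_contra hno
          push_neg at hno
          have : v G ≤ 0 := v_nonpos_of (fun m hm => by
            have := hno m hm
            simp only [w]; split_ifs <;> first | exact (‹False›).elim | omega)
          omega
        obtain ⟨n, hn, hn2⟩ := h2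
        refine LeftWinsWaiter.intro G ⟨_, n, hn, 0, by omega, rfl⟩ ?_
        intro G' mv
        obtain ⟨hv, hs⟩ := right_v mv
        exact ((IH G'.sum (by omega) G' rfl).1).mpr (by omega)

lemma v_add (A B : Multiset ℕ) : v (A + B) = v A + v B := by
  simp [v]

lemma v_pos (a b : ℕ) : v (pos a b) = (b : ℤ) - a := by
  have w1 : w 1 = -1 := rfl
  have w2 : w 2 = 1 := rfl
  simp [v, pos, Multiset.map_replicate, Multiset.sum_replicate, w1, w2]
  push_cast
  ring

lemma outcome_congr {G H : Multiset ℕ} (hv : v G = v H) : outcome G = outcome H := by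
  have hG := main G.sum G rfl
  have hH := main H.sum H rfl
  have h1 : LeftWinsMover G ↔ LeftWinsMover H := by rw [hG.1, hH.1, hv]
  have h2 : LeftWinsWaiter G ↔ LeftWinsWaiter H := by rw [hG.2, hH.2, hv]
  unfold outcome
  rw [propext h1, propext h2]

theorem kayles_reduction (n k : ℕ) (h : 3 ≤ n) :
    (n = 3 * k → ∀ X : Multiset ℕ, 0 ∉ X →
      outcome (n ::ₘ X) = outcome (pos k k + X)) ∧
    (n = 3 * k + 1 → ∀ X : Multiset ℕ, 0 ∉ X →
      outcome (n ::ₘ X) = outcome (pos (k + 1) k + X)) ∧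
    (n = 3 * k + 2 → ∀ X : Multiset ℕ, 0 ∉ X →
      outcome (n ::ₘ X) = outcome (pos k (k + 1) + X)) := by
  refine ⟨?_, ?_, ?_⟩ <;> intro hn X _ <;> subst hn <;> apply outcome_congr <;>
    rw [v_cons, v_add, v_pos] <;>
    · simp only [w]
      split_ifs <;> omega
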